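/- arXiv:math/0507108 — 3 statements merged into one kernel-verified Lean document; each statement's English description precedes it below -/
import Mathlib

section
/- For all real numbers a ≥ b > 0, writing e² = 1 − b²/a², one has the identity of convergent series 2a · ∑_{m=0}^∞ (−1/(2m−1)) · (C(2m,m)/4^m)² · e^{2m} = (a+b) · ∑_{n=0}^∞ (C(2n,n)/((2n−1)·4^n))² · ((a−b)/(a+b))^{2n}. -/
open Finset Real MeasureTheory intervalIntegral Metric

noncomputable section

namespace EllipseAux




/-- The Maclaurin coefficient of `√(1-x)`. -/
def g (n : ℕ) : ℝ := -1 / (2 * (n : ℝ) - 1) * ((Nat.choose (2 * n) n : ℝ) / 4 ^ n)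

lemma g_zero : g 0 = 1 := by norm_num [g]

lemma choose_eq_centralBinom (n : ℕ) : Nat.choose (2 * n) n = Nat.centralBinom n := rfl

lemma two_n_sub_one_ne (n : ℕ) : (2 * (n : ℝ) - 1) ≠ 0 := by
  rcases Nat.eq_zero_or_pos n with rfl | hn
  · norm_num
  · have : (1 : ℝ) ≤ (n : ℝ) := by exact_mod_cast hn
    nlinarith

lemma g_succ (n : ℕ) : g (n + 1) * (2 * (n : ℝ) + 2) = g n * (2 * (n : ℝ) - 1) := by
  have h := Nat.succ_mul_centralBinom_succ n
  have h' : ((n : ℝ) + 1) * (Nat.centralBinom (n + 1) : ℝ)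
      = 2 * (2 * (n : ℝ) + 1) * (Nat.centralBinom n : ℝ) := by exact_mod_cast h
  simp only [g, choose_eq_centralBinom]
  have h2 := two_n_sub_one_ne n
  have h1 : (2 * ((n : ℝ) + 1) - 1) ≠ 0 := by
    have : (0:ℝ) < 2 * (n:ℝ) + 1 := by positivity
    intro hc; nlinarith
  have hn1 : ((n : ℝ) + 1) ≠ 0 := by positivity
  have h4 : (4 : ℝ) ^ n ≠ 0 := by positivity
  push_cast
  field_simp
  linear_combination (-2 * (4:ℝ) ^ n) * h'



lemma centralBinom_le_four_pow (n : ℕ) : (Nat.centralBinom n : ℝ) ≤ 4 ^ n := by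
  induction n with
  | zero => norm_num [Nat.centralBinom]
  | succ k ih =>
    have h' : ((k : ℝ) + 1) * (Nat.centralBinom (k + 1) : ℝ)
        = 2 * (2 * (k : ℝ) + 1) * (Nat.centralBinom k : ℝ) := by
      exact_mod_cast Nat.succ_mul_centralBinom_succ k
    have hk : (0 : ℝ) < (k : ℝ) + 1 := by positivity
    have h2 : (Nat.centralBinom (k + 1) : ℝ) ≤ 4 * 4 ^ k := by
      rw [← mul_le_mul_iff_right₀ hk, h']
      nlinarith [pow_pos (show (0:ℝ) < 4 by norm_num) k,
        Nat.cast_nonneg (α := ℝ) (Nat.centralBinom k)]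
    calc (Nat.centralBinom (k+1) : ℝ) ≤ 4 * 4 ^ k := h2
      _ = 4 ^ (k+1) := by ring

lemma abs_g_le_one (n : ℕ) : |g n| ≤ 1 := by
  have h1 : (1 : ℝ) ≤ |2 * (n : ℝ) - 1| := by
    rcases Nat.eq_zero_or_pos n with rfl | hn
    · norm_num
    · have : (1 : ℝ) ≤ (n : ℝ) := by exact_mod_cast hn
      rw [_root_.abs_of_nonneg (by linarith)]; linarith
  have h2 : |(Nat.choose (2 * n) n : ℝ) / 4 ^ n| ≤ 1 := by
    rw [_root_.abs_of_nonneg (by positivity), div_le_one (by positivity)]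
    simpa [choose_eq_centralBinom] using centralBinom_le_four_pow n
  have h3 : |(-1 : ℝ) / (2 * (n : ℝ) - 1)| ≤ 1 := by
    rw [abs_div, abs_neg, abs_one, div_le_one (lt_of_lt_of_le one_pos h1)]
    exact h1
  calc |g n| = |(-1 : ℝ) / (2 * (n : ℝ) - 1)| * |(Nat.choose (2 * n) n : ℝ) / 4 ^ n| := by
        rw [g, abs_mul]
    _ ≤ 1 * 1 := mul_le_mul h3 h2 (abs_nonneg _) one_pos.le
    _ = 1 := by ring

/-- Taylor coefficients of `(1+z)^(1/2)` at `0` equal `(-1)^n * g n`. -/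
lemma taylor_coeff (n : ℕ) :
    ((n.factorial : ℂ))⁻¹ * ∏ i ∈ range n, ((1 : ℂ) / 2 - i) = (((-1) ^ n * g n : ℝ) : ℂ) := by
  induction n with
  | zero => simp [g_zero]
  | succ k ih =>
    have hgC : ((g (k+1) : ℝ) : ℂ) * (2 * (k:ℂ) + 2) = ((g k : ℝ) : ℂ) * (2 * (k:ℂ) - 1) := by
      exact_mod_cast congrArg (fun x : ℝ => (x : ℂ)) (g_succ k)
    have hk : ((k.factorial : ℂ)) ≠ 0 := by exact_mod_cast Nat.factorial_ne_zero k
    have hk1 : ((k : ℂ) + 1) ≠ 0 := by exact_mod_cast Nat.cast_add_one_ne_zero (R := ℂ) k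
    rw [prod_range_succ, Nat.factorial_succ]
    push_cast
    rw [mul_inv]
    have lhs_eq : ((k:ℂ) + 1)⁻¹ * ((k.factorial : ℂ))⁻¹ *
        ((∏ i ∈ range k, ((1 : ℂ) / 2 - i)) * ((1:ℂ)/2 - k))
        = (((k.factorial : ℂ))⁻¹ * ∏ i ∈ range k, ((1 : ℂ) / 2 - i)) *
          (((1:ℂ)/2 - k) * ((k:ℂ) + 1)⁻¹) := by ring
    rw [lhs_eq, ih]
    push_cast
    field_simp
    linear_combination ((-1:ℂ))^k * hgC



/-- The function `(1+z)^(1/2)`. -/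
def F (z : ℂ) : ℂ := (1 + z) ^ ((1 : ℂ)/2)

lemma one_add_mem_slitPlane {z : ℂ} (hz : ‖z‖ < 1) : (1 + z) ∈ Complex.slitPlane := by
  rw [Complex.mem_slitPlane_iff]
  left
  have h := abs_lt.mp (lt_of_le_of_lt (Complex.abs_re_le_norm z) hz)
  simp only [Complex.add_re, Complex.one_re]
  linarith [h.1]

lemma hasDerivAt_cpow_one_add {z : ℂ} (hz : ‖z‖ < 1) (s : ℂ) :
    HasDerivAt (fun w : ℂ => (1 + w) ^ s) (s * (1 + z) ^ (s - 1)) z := by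
  have h1 : HasDerivAt (fun w : ℂ => 1 + w) 1 z := by
    simpa using (hasDerivAt_id z).const_add (1 : ℂ)
  simpa using h1.cpow_const (one_add_mem_slitPlane hz)

lemma iteratedDeriv_F (n : ℕ) {z : ℂ} (hz : z ∈ ball (0:ℂ) 1) :
    iteratedDeriv n F z = (∏ i ∈ range n, ((1:ℂ)/2 - i)) * (1 + z) ^ ((1:ℂ)/2 - n) := by
  induction n generalizing z with
  | zero => simp [F]
  | succ k ih =>
    rw [iteratedDeriv_succ]
    have habs : ‖z‖ < 1 := by simpa [mem_ball, Complex.dist_eq] using hz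
    have hev : iteratedDeriv k F =ᶠ[nhds z]
        fun w => (∏ i ∈ range k, ((1:ℂ)/2 - i)) * (1 + w) ^ ((1:ℂ)/2 - k) := by
      filter_upwards [isOpen_ball.mem_nhds hz] with w hw
      exact ih hw
    rw [hev.deriv_eq]
    have hd : HasDerivAt (fun w => (∏ i ∈ range k, ((1:ℂ)/2 - i)) * (1 + w) ^ ((1:ℂ)/2 - k))
        ((∏ i ∈ range k, ((1:ℂ)/2 - i)) * (((1:ℂ)/2 - k) * (1 + z) ^ ((1:ℂ)/2 - k - 1))) z :=
      (hasDerivAt_cpow_one_add habs _).const_mul _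
    have hexp : ((1:ℂ)/2 - (k:ℂ) - 1) = (1:ℂ)/2 - ((k+1 : ℕ):ℂ) := by push_cast; ring
    rw [hd.deriv, prod_range_succ, ← hexp]
    ring

lemma differentiableOn_F : DifferentiableOn ℂ F (ball (0:ℂ) 1) := by
  intro z hz
  have habs : ‖z‖ < 1 := by simpa [mem_ball, Complex.dist_eq] using hz
  exact ((hasDerivAt_cpow_one_add habs ((1:ℂ)/2)).differentiableAt).differentiableWithinAt

lemma hasSum_binomial {z : ℂ} (hz : ‖z‖ < 1) :
    HasSum (fun n => (((-1) ^ n * g n : ℝ) : ℂ) * z ^ n) ((1 + z) ^ ((1:ℂ)/2)) := by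
  have hz' : z ∈ ball (0:ℂ) 1 := by simpa [mem_ball, Complex.dist_eq] using hz
  have H := Complex.hasSum_taylorSeries_on_ball differentiableOn_F hz'
  have heq : ∀ n : ℕ, (n.factorial : ℂ)⁻¹ • (z - 0) ^ n • iteratedDeriv n F 0
      = (((-1) ^ n * g n : ℝ) : ℂ) * z ^ n := by
    intro n
    have h0 : (0:ℂ) ∈ ball (0:ℂ) 1 := by simp
    rw [iteratedDeriv_F n h0]
    rw [← taylor_coeff n]
    simp [smul_eq_mul]
    ring
  rw [show F z = (1 + z) ^ ((1:ℂ)/2) from rfl] at H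
  exact funext heq ▸ H



lemma hasSum_sqrt {x : ℝ} (h0 : 0 ≤ x) (h1 : x < 1) :
    HasSum (fun n => g n * x ^ n) (Real.sqrt (1 - x)) := by
  have hz : ‖-(x:ℂ)‖ < 1 := by
    rwa [norm_neg, Complex.norm_real, Real.norm_eq_abs, _root_.abs_of_nonneg h0]
  have H := hasSum_binomial hz
  have hbase : (1 + -(x:ℂ)) = (((1 - x : ℝ)) : ℂ) := by push_cast; ring
  have hpow : ((1:ℂ) + -(x:ℂ)) ^ ((1:ℂ)/2) = ((Real.sqrt (1 - x) : ℝ) : ℂ) := by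
    rw [hbase, Real.sqrt_eq_rpow, show ((1:ℂ)/2) = ((1/2 : ℝ) : ℂ) by norm_num,
      Complex.ofReal_cpow (by linarith)]
  rw [hpow] at H
  have heq : ∀ n : ℕ, (((-1) ^ n * g n : ℝ) : ℂ) * (-(x:ℂ)) ^ n = ((g n * x ^ n : ℝ) : ℂ) := by
    intro n
    have : (-(x:ℂ)) ^ n = (-1) ^ n * (x:ℂ) ^ n := by rw [neg_pow]
    rw [this]
    push_cast
    ring_nf
    rw [mul_comm n 2, pow_mul]
    norm_num
  rw [funext heq] at H
  exact Complex.hasSum_ofReal.mp H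



lemma prod_wallis (n : ℕ) :
    (∏ i ∈ range n, (2 * (i:ℝ) + 1) / (2 * i + 2)) = (Nat.centralBinom n : ℝ) / 4 ^ n := by
  induction n with
  | zero => simp [Nat.centralBinom]
  | succ k ih =>
    rw [prod_range_succ, ih]
    have h' : ((k : ℝ) + 1) * (Nat.centralBinom (k + 1) : ℝ)
        = 2 * (2 * (k : ℝ) + 1) * (Nat.centralBinom k : ℝ) := by
      exact_mod_cast Nat.succ_mul_centralBinom_succ k
    have hk1 : ((k:ℝ) + 1) ≠ 0 := by positivity
    have h4 : (4:ℝ) ^ k ≠ 0 := by positivity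
    field_simp
    linear_combination (-2 * (4:ℝ)^k) * h'

lemma integral_sin_pow_two_pi (m : ℕ) :
    (∫ θ in (0:ℝ)..(2 * π), Real.sin θ ^ (2 * m))
      = 2 * π * ((Nat.centralBinom m : ℝ) / 4 ^ m) := by
  have hper : Function.Periodic (fun θ : ℝ => Real.sin θ ^ (2 * m)) π := by
    intro x
    simp only [Real.sin_add_pi]
    rw [pow_mul, pow_mul, neg_sq]
  have hsplit : (∫ θ in (0:ℝ)..(2 * π), Real.sin θ ^ (2 * m))
      = (∫ θ in (0:ℝ)..π, Real.sin θ ^ (2 * m)) + ∫ θ in π..(2*π), Real.sin θ ^ (2 * m) := by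
    rw [integral_add_adjacent_intervals] <;>
      exact (Real.continuous_sin.pow _).intervalIntegrable _ _
  have h2 : (∫ θ in π..(2*π), Real.sin θ ^ (2 * m))
      = ∫ θ in (0:ℝ)..π, Real.sin θ ^ (2 * m) := by
    have := hper.intervalIntegral_add_eq π 0
    simpa [two_mul, zero_add] using this
  rw [hsplit, h2, integral_sin_pow_even, prod_wallis]
  ring



lemma maclaurin_hasSum (a b : ℝ) (hb : 0 < b) (hba : b ≤ a) {s : ℝ} (hs0 : 0 ≤ s) (hs1 : s < 1)
    (hsab : a ^ 2 * s = a ^ 2 - b ^ 2) :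
    HasSum (fun m => 2 * π * a * (g m * ((Nat.centralBinom m : ℝ) / 4 ^ m) * s ^ m))
      (∫ θ in (0:ℝ)..(2 * π), Real.sqrt (a ^ 2 * Real.cos θ ^ 2 + b ^ 2 * Real.sin θ ^ 2)) := by
  have ha : 0 < a := lt_of_lt_of_le hb hba
  -- Step 1: interchange of sum and integral
  have step1 : HasSum (fun m => ∫ θ in (0:ℝ)..(2 * π), g m * s ^ m * Real.sin θ ^ (2 * m))
      (∫ θ in (0:ℝ)..(2 * π), Real.sqrt (1 - s * Real.sin θ ^ 2)) := by
    apply intervalIntegral.hasSum_integral_of_dominated_convergence (bound := fun m _ => s ^ m)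
    · intro m
      exact (Continuous.aestronglyMeasurable (by fun_prop))
    · intro m
      filter_upwards with θ _
      have h1 : |Real.sin θ ^ (2 * m)| ≤ 1 := by
        rw [abs_pow]
        exact pow_le_one₀ (abs_nonneg _) (abs_sin_le_one θ)
      calc ‖g m * s ^ m * Real.sin θ ^ (2 * m)‖
          = |g m| * s ^ m * |Real.sin θ ^ (2 * m)| := by
            rw [Real.norm_eq_abs, abs_mul, abs_mul, abs_pow, abs_of_nonneg hs0]
        _ ≤ 1 * s ^ m * 1 := by
            apply mul_le_mul (mul_le_mul (abs_g_le_one m) le_rfl (by positivity) one_pos.le) h1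
              (abs_nonneg _) (by positivity)
        _ = s ^ m := by ring
    · filter_upwards with θ _
      exact summable_geometric_of_lt_one hs0 hs1
    · exact intervalIntegrable_const
    · filter_upwards with θ _
      have hx0 : 0 ≤ s * Real.sin θ ^ 2 := by positivity
      have hsin : Real.sin θ ^ 2 ≤ 1 := by
        nlinarith [Real.sin_sq_add_cos_sq θ, sq_nonneg (Real.cos θ)]
      have hx1 : s * Real.sin θ ^ 2 < 1 :=
        lt_of_le_of_lt (by nlinarith) hs1
      have H := hasSum_sqrt hx0 hx1
      have : ∀ m : ℕ, g m * (s * Real.sin θ ^ 2) ^ m = g m * s ^ m * Real.sin θ ^ (2 * m) := by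
        intro m
        rw [mul_pow, pow_mul]
        ring
      rwa [funext this] at H
  -- Step 2: evaluate each integral
  have step2 : ∀ m : ℕ, (∫ θ in (0:ℝ)..(2 * π), g m * s ^ m * Real.sin θ ^ (2 * m))
      = 2 * π * (g m * ((Nat.centralBinom m : ℝ) / 4 ^ m) * s ^ m) := by
    intro m
    rw [intervalIntegral.integral_const_mul, integral_sin_pow_two_pi]
    ring
  rw [funext step2] at step1
  -- Step 3: multiply by a and identify integrand
  have step3 := step1.mul_left a
  have hint : a * (∫ θ in (0:ℝ)..(2 * π), Real.sqrt (1 - s * Real.sin θ ^ 2))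
      = ∫ θ in (0:ℝ)..(2 * π), Real.sqrt (a ^ 2 * Real.cos θ ^ 2 + b ^ 2 * Real.sin θ ^ 2) := by
    rw [← intervalIntegral.integral_const_mul]
    apply intervalIntegral.integral_congr
    intro θ _
    have h1 : a ^ 2 * Real.cos θ ^ 2 + b ^ 2 * Real.sin θ ^ 2
        = a ^ 2 * (1 - s * Real.sin θ ^ 2) := by
      have hcs := Real.sin_sq_add_cos_sq θ
      nlinarith [hsab]
    show a * Real.sqrt (1 - s * Real.sin θ ^ 2)
        = Real.sqrt (a ^ 2 * Real.cos θ ^ 2 + b ^ 2 * Real.sin θ ^ 2)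
    rw [h1, Real.sqrt_mul (sq_nonneg a), Real.sqrt_sq ha.le]
  rw [hint] at step3
  have : ∀ m : ℕ, a * (2 * π * (g m * ((Nat.centralBinom m : ℝ) / 4 ^ m) * s ^ m))
      = 2 * π * a * (g m * ((Nat.centralBinom m : ℝ) / 4 ^ m) * s ^ m) := fun m => by ring
  rwa [funext this] at step3



lemma half_eq : ((1:ℂ)/2) = (((1/2 : ℝ)) : ℂ) := by norm_num

section setup
variable (h : ℝ)

/-- the rotating factor -/
def w (θ : ℝ) : ℂ := (h : ℂ) * Complex.exp ((↑(-2 * θ) : ℂ) * Complex.I)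

def f (θ : ℝ) : ℂ := (1 + w h θ) ^ ((1:ℂ)/2)

def cf (n : ℕ) : ℂ := (((-1) ^ n * g n : ℝ) : ℂ)

def q (n : ℕ) (θ : ℝ) : ℂ := cf n * (w h θ) ^ n

end setup

section
variable {h : ℝ} (hh0 : 0 ≤ h) (hh1 : h < 1)

lemma abs_w (θ : ℝ) : ‖w h θ‖ = |h| := by
  simp [w, Complex.norm_exp]

include hh0 in
lemma abs_w' (θ : ℝ) : ‖w h θ‖ = h := by
  rw [abs_w, _root_.abs_of_nonneg hh0]

include hh0 hh1 in
lemma abs_w_lt (θ : ℝ) : ‖w h θ‖ < 1 := by rw [abs_w' hh0]; exact hh1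

include hh0 hh1 in
lemma hasSum_f (θ : ℝ) : HasSum (fun n => q h n θ) (f h θ) :=
  hasSum_binomial (abs_w_lt hh0 hh1 θ)

lemma continuous_w : Continuous (w h) := by
  apply continuous_const.mul
  exact Complex.continuous_exp.comp (by continuity)

include hh0 hh1 in
lemma continuous_f : Continuous (f h) := by
  apply Continuous.cpow (by exact continuous_const.add (continuous_w (h := h)))
      continuous_const
  intro θ
  rw [Complex.mem_slitPlane_iff]
  left
  have h1 := Complex.abs_re_le_norm (w h θ)
  rw [abs_w' hh0] at h1
  have := abs_le.mp h1
  simp only [Complex.add_re, Complex.one_re]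
  linarith [this.1]

include hh0 hh1 in
lemma abs_one_add_w_le (θ : ℝ) : ‖1 + w h θ‖ ≤ 2 := by
  calc ‖1 + w h θ‖ ≤ ‖(1:ℂ)‖ + ‖w h θ‖ := norm_add_le _ _
    _ = 1 + h := by rw [abs_w' hh0, norm_one]
    _ ≤ 2 := by linarith

include hh0 hh1 in
lemma norm_f_le (θ : ℝ) : ‖f h θ‖ ≤ Real.sqrt 2 := by
  rw [f, half_eq, Complex.norm_cpow_real, Real.sqrt_eq_rpow]
  exact Real.rpow_le_rpow (norm_nonneg _) (abs_one_add_w_le hh0 hh1 θ) (by norm_num)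

include hh0 in
lemma norm_q_le (n : ℕ) (θ : ℝ) : ‖q h n θ‖ ≤ h ^ n := by
  rw [q, norm_mul, norm_pow, abs_w' hh0]
  have h1 : ‖cf n‖ ≤ 1 := by
    rw [cf, Complex.norm_real, Real.norm_eq_abs]
    calc |(-1 : ℝ) ^ n * g n| = |g n| := by
          rw [_root_.abs_mul, _root_.abs_pow, abs_neg, abs_one, one_pow, one_mul]
      _ ≤ 1 := abs_g_le_one n
  calc ‖cf n‖ * h ^ n ≤ 1 * h ^ n := by
        apply mul_le_mul_of_nonneg_right h1 (by positivity)
    _ = h ^ n := one_mul _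

/-- pointwise product expansion -/
lemma q_mul_conj (n m : ℕ) (θ : ℝ) : q h n θ * (starRingEnd ℂ) (q h m θ)
    = cf n * cf m * (h : ℂ) ^ (n + m) *
      Complex.exp (((2 * (m : ℤ) - 2 * (n : ℤ) : ℤ) : ℂ) * Complex.I * (θ : ℂ)) := by
  simp only [q, w, map_mul, map_pow, Complex.conj_ofReal, mul_pow,
    ← Complex.exp_nat_mul, ← Complex.exp_conj, map_mul, Complex.conj_I, map_natCast]
  have hcf : (starRingEnd ℂ) (cf m) = cf m := by rw [cf, Complex.conj_ofReal]
  rw [hcf]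
  have hmerge : Complex.exp ((n:ℂ) * ((↑(-2 * θ) : ℂ) * Complex.I)) *
      Complex.exp ((m:ℂ) * ((↑(-2 * θ) : ℂ) * -Complex.I))
      = Complex.exp (((2 * (m : ℤ) - 2 * (n : ℤ) : ℤ) : ℂ) * Complex.I * (θ : ℂ)) := by
    rw [← Complex.exp_add]
    congr 1
    push_cast
    ring
  rw [← hmerge, pow_add]
  ring



lemma integral_exp_int (z : ℤ) :
    (∫ θ in (0:ℝ)..(2 * π), Complex.exp ((z : ℂ) * Complex.I * (θ : ℂ)))
      = if z = 0 then ((2 * π : ℝ) : ℂ) else 0 := by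
  rcases eq_or_ne z 0 with rfl | hz
  · simp
  · rw [if_neg hz]
    have hc : ((z : ℂ) * Complex.I) ≠ 0 :=
      mul_ne_zero (Int.cast_ne_zero.mpr hz) Complex.I_ne_zero
    have := integral_exp_mul_complex (a := 0) (b := 2 * π) hc
    rw [show (fun x : ℝ => Complex.exp ((z : ℂ) * Complex.I * (x:ℂ)))
        = fun x : ℝ => Complex.exp ((z : ℂ) * Complex.I * (x:ℂ)) from rfl]
    rw [this]
    have h1 : (z : ℂ) * Complex.I * ((2 * π : ℝ) : ℂ) = (z : ℂ) * (2 * (π:ℂ) * Complex.I) := by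
      push_cast; ring
    rw [h1, Complex.exp_int_mul_two_pi_mul_I]
    simp



end
section
variable {h : ℝ} (hh0 : 0 ≤ h) (hh1 : h < 1)

lemma integral_q_mul_conj (n m : ℕ) :
    (∫ θ in (0:ℝ)..(2 * π), q h n θ * (starRingEnd ℂ) (q h m θ))
      = if m = n then ((2 * π : ℝ) : ℂ) * (cf n) ^ 2 * (h : ℂ) ^ (2 * n) else 0 := by
  have : (∫ θ in (0:ℝ)..(2 * π), q h n θ * (starRingEnd ℂ) (q h m θ))
      = ∫ θ in (0:ℝ)..(2 * π), cf n * cf m * (h : ℂ) ^ (n + m) *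
          Complex.exp (((2 * (m : ℤ) - 2 * (n : ℤ) : ℤ) : ℂ) * Complex.I * (θ : ℂ)) :=
    intervalIntegral.integral_congr fun θ _ => q_mul_conj n m θ
  rw [this, intervalIntegral.integral_const_mul, integral_exp_int]
  rcases eq_or_ne m n with rfl | hmn
  · rw [if_pos (by ring), if_pos rfl]
    rw [show m + m = 2 * m from by ring, sq]
    ring
  · rw [if_neg (by omega), if_neg hmn, mul_zero]

include hh0 hh1 in
lemma integral_q_mul_conj_f (n : ℕ) :
    (∫ θ in (0:ℝ)..(2 * π), q h n θ * (starRingEnd ℂ) (f h θ))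
      = ((2 * π : ℝ) : ℂ) * (cf n) ^ 2 * (h : ℂ) ^ (2 * n) := by
  have hf_cont : Continuous (f h) := continuous_f hh0 hh1
  have hq_cont : ∀ k : ℕ, Continuous (q h k) :=
    fun k => continuous_const.mul ((continuous_w (h := h)).pow k)
  have key : HasSum (fun m => ∫ θ in (0:ℝ)..(2 * π), q h n θ * (starRingEnd ℂ) (q h m θ))
      (∫ θ in (0:ℝ)..(2 * π), q h n θ * (starRingEnd ℂ) (f h θ)) := by
    apply intervalIntegral.hasSum_integral_of_dominated_convergence
      (bound := fun m _ => h ^ n * h ^ m)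
    · intro m
      exact (((hq_cont n).mul ((hq_cont m).star)).aestronglyMeasurable)
    · intro m
      filter_upwards with θ _
      rw [norm_mul]
      calc ‖q h n θ‖ * ‖(starRingEnd ℂ) (q h m θ)‖
          = ‖q h n θ‖ * ‖q h m θ‖ := by rw [RCLike.norm_conj]
        _ ≤ h ^ n * h ^ m := mul_le_mul (norm_q_le hh0 n θ) (norm_q_le hh0 m θ)
            (norm_nonneg _) (by positivity)
    · filter_upwards with θ _
      exact (summable_geometric_of_lt_one hh0 hh1).mul_left _
    · exact intervalIntegrable_const
    · filter_upwards with θ _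
      exact ((hasSum_f hh0 hh1 θ).map (starRingEnd ℂ) continuous_star).mul_left (q h n θ)
  rw [funext (integral_q_mul_conj (h := h) n)] at key
  have single : HasSum
      (fun m => if m = n then ((2 * π : ℝ) : ℂ) * (cf n) ^ 2 * (h : ℂ) ^ (2 * n) else 0)
      (((2 * π : ℝ) : ℂ) * (cf n) ^ 2 * (h : ℂ) ^ (2 * n)) := by
    have := hasSum_ite_eq n (((2 * π : ℝ) : ℂ) * (cf n) ^ 2 * (h : ℂ) ^ (2 * n))
    exact this
  exact key.unique single

include hh0 hh1 in
lemma hasSum_integral_f_sq :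
    HasSum (fun n => ((2 * π * (g n) ^ 2 * h ^ (2 * n) : ℝ) : ℂ))
      (∫ θ in (0:ℝ)..(2 * π), f h θ * (starRingEnd ℂ) (f h θ)) := by
  have hf_cont : Continuous (f h) := continuous_f hh0 hh1
  have hq_cont : ∀ k : ℕ, Continuous (q h k) :=
    fun k => continuous_const.mul ((continuous_w (h := h)).pow k)
  have key : HasSum (fun n => ∫ θ in (0:ℝ)..(2 * π), q h n θ * (starRingEnd ℂ) (f h θ))
      (∫ θ in (0:ℝ)..(2 * π), f h θ * (starRingEnd ℂ) (f h θ)) := by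
    apply intervalIntegral.hasSum_integral_of_dominated_convergence
      (bound := fun n _ => h ^ n * Real.sqrt 2)
    · intro n
      exact ((hq_cont n).mul (hf_cont.star)).aestronglyMeasurable
    · intro n
      filter_upwards with θ _
      rw [norm_mul]
      calc ‖q h n θ‖ * ‖(starRingEnd ℂ) (f h θ)‖ = ‖q h n θ‖ * ‖f h θ‖ := by
            rw [RCLike.norm_conj]
        _ ≤ h ^ n * Real.sqrt 2 := mul_le_mul (norm_q_le hh0 n θ) (norm_f_le hh0 hh1 θ)
            (norm_nonneg _) (by positivity)
    · filter_upwards with θ _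
      exact (summable_geometric_of_lt_one hh0 hh1).mul_right _
    · exact intervalIntegrable_const
    · filter_upwards with θ _
      exact (hasSum_f hh0 hh1 θ).mul_right ((starRingEnd ℂ) (f h θ))
  rw [funext (integral_q_mul_conj_f hh0 hh1)] at key
  have : ∀ n : ℕ, ((2 * π : ℝ) : ℂ) * (cf n) ^ 2 * (h : ℂ) ^ (2 * n)
      = ((2 * π * (g n) ^ 2 * h ^ (2 * n) : ℝ) : ℂ) := by
    intro n
    rw [cf]
    push_cast
    ring_nf
    rw [mul_comm n 2, pow_mul]
    norm_num
  rwa [funext this] at key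



end
section
variable {h : ℝ} (hh0 : 0 ≤ h) (hh1 : h < 1)

lemma f_mul_conj (θ : ℝ) :
    f h θ * (starRingEnd ℂ) (f h θ) = ((‖1 + w h θ‖ : ℝ) : ℂ) := by
  rw [Complex.mul_conj, Complex.normSq_eq_norm_sq]
  congr 1
  rw [f, half_eq, Complex.norm_cpow_real]
  rw [← Real.rpow_natCast (‖1 + w h θ‖ ^ (1/2 : ℝ)) 2,
    ← Real.rpow_mul (norm_nonneg _)]
  norm_num

include hh0 hh1 in
lemma hasSum_integral_abs :
    HasSum (fun n => 2 * π * (g n) ^ 2 * h ^ (2 * n))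
      (∫ θ in (0:ℝ)..(2 * π), ‖1 + w h θ‖) := by
  have H := hasSum_integral_f_sq hh0 hh1
  have : (∫ θ in (0:ℝ)..(2 * π), f h θ * (starRingEnd ℂ) (f h θ))
      = ((∫ θ in (0:ℝ)..(2 * π), ‖1 + w h θ‖ : ℝ) : ℂ) := by
    rw [← intervalIntegral.integral_ofReal]
    exact intervalIntegral.integral_congr fun θ _ => f_mul_conj θ
  rw [this] at H
  exact Complex.hasSum_ofReal.mp H

/-- geometric identification of the integrand -/
lemma abs_integrand (a b : ℝ) (hb : 0 < b) (hba : b ≤ a)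
    (hh : h = (a - b) / (a + b)) (θ : ℝ) :
    (a + b) / 2 * ‖1 + w h θ‖
      = Real.sqrt (a ^ 2 * Real.cos θ ^ 2 + b ^ 2 * Real.sin θ ^ 2) := by
  have hab : (0:ℝ) < a + b := by linarith
  have key : (((a + b) / 2 : ℝ) : ℂ) * (1 + w h θ) * Complex.exp ((θ:ℂ) * Complex.I)
      = ((a * Real.cos θ : ℝ) : ℂ) + ((b * Real.sin θ : ℝ) : ℂ) * Complex.I := by
    have hCD : Complex.exp ((↑(-2*θ):ℂ) * Complex.I) * Complex.exp ((θ:ℂ) * Complex.I)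
        = Complex.exp ((↑(-θ):ℂ) * Complex.I) := by
      rw [← Complex.exp_add]; congr 1; push_cast; ring
    have hD : Complex.exp ((θ:ℂ) * Complex.I)
        = ((Real.cos θ : ℝ):ℂ) + ((Real.sin θ : ℝ):ℂ) * Complex.I := by
      rw [Complex.exp_mul_I, Complex.ofReal_cos, Complex.ofReal_sin]
    have hE : Complex.exp ((↑(-θ):ℂ) * Complex.I)
        = ((Real.cos θ : ℝ):ℂ) - ((Real.sin θ : ℝ):ℂ) * Complex.I := by
      rw [Complex.exp_mul_I, Complex.ofReal_neg, Complex.cos_neg, Complex.sin_neg,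
        Complex.ofReal_cos, Complex.ofReal_sin]
      ring
    have hstep : (((a + b) / 2 : ℝ) : ℂ) * (1 + w h θ) * Complex.exp ((θ:ℂ) * Complex.I)
        = (((a + b) / 2 : ℝ) : ℂ) * Complex.exp ((θ:ℂ) * Complex.I)
          + (((a + b) / 2 : ℝ) : ℂ) * (h:ℂ) *
            (Complex.exp ((↑(-2*θ):ℂ) * Complex.I) * Complex.exp ((θ:ℂ) * Complex.I)) := by
      rw [w]; ring
    rw [hstep, hCD, hD, hE, hh]
    have hab' : (a:ℂ) + b ≠ 0 := by
      have : ((a + b : ℝ) : ℂ) ≠ 0 := Complex.ofReal_ne_zero.mpr (ne_of_gt hab)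
      push_cast at this; exact this
    push_cast
    field_simp
    ring
  have habs := congrArg Norm.norm key
  rw [norm_mul, norm_mul, Complex.norm_exp_ofReal_mul_I, mul_one, Complex.norm_real, Real.norm_eq_abs,
    _root_.abs_of_pos (by linarith : (0:ℝ) < (a+b)/2)] at habs
  rw [habs]
  rw [show ((a * Real.cos θ : ℝ) : ℂ) + ((b * Real.sin θ : ℝ) : ℂ) * Complex.I
    = Complex.mk (a * Real.cos θ) (b * Real.sin θ) from by
      rw [Complex.mk_eq_add_mul_I]]
  rw [Complex.norm_def, Complex.normSq_mk]
  ring_nf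



lemma ivory_hasSum (a b : ℝ) (hb : 0 < b) (hba : b ≤ a) {h : ℝ}
    (hh : h = (a - b) / (a + b)) (hh0 : 0 ≤ h) (hh1 : h < 1) :
    HasSum (fun n => π * (a + b) * ((g n) ^ 2 * h ^ (2 * n)))
      (∫ θ in (0:ℝ)..(2 * π), Real.sqrt (a ^ 2 * Real.cos θ ^ 2 + b ^ 2 * Real.sin θ ^ 2)) := by
  have H := (hasSum_integral_abs hh0 hh1).mul_left ((a + b)/2)
  have hint : (a + b)/2 * (∫ θ in (0:ℝ)..(2 * π), ‖1 + w h θ‖)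
      = ∫ θ in (0:ℝ)..(2 * π), Real.sqrt (a ^ 2 * Real.cos θ ^ 2 + b ^ 2 * Real.sin θ ^ 2) := by
    rw [← intervalIntegral.integral_const_mul]
    exact intervalIntegral.integral_congr fun θ _ => abs_integrand a b hb hba hh θ
  rw [hint] at H
  have : ∀ n : ℕ, (a + b)/2 * (2 * π * (g n) ^ 2 * h ^ (2 * n))
      = π * (a + b) * ((g n) ^ 2 * h ^ (2 * n)) := fun n => by ring
  rwa [funext this] at H

end
end EllipseAux

end
/-- Equality of Maclaurin's and Ivory's series for the ellipse perimeter (divided by π):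
for `a ≥ b > 0` and `e² = 1 − b²/a²`. -/
theorem maclaurin_eq_ivory (a b : ℝ) (hb : 0 < b) (hba : b ≤ a)
    (e : ℝ) (he0 : 0 ≤ e) (he : e ^ 2 = 1 - b ^ 2 / a ^ 2) :
    2 * a *
        ∑' m : ℕ, (-1 / (2 * (m : ℝ) - 1)) * ((Nat.choose (2 * m) m : ℝ) / 4 ^ m) ^ 2 *
          e ^ (2 * m)
    = (a + b) *
        ∑' n : ℕ, ((Nat.choose (2 * n) n : ℝ) / ((2 * (n : ℝ) - 1) * 4 ^ n)) ^ 2 *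
          ((a - b) / (a + b)) ^ (2 * n) := by
  have ha : 0 < a := lt_of_lt_of_le hb hba
  have hab : 0 < a + b := by linarith
  have hs0 : (0:ℝ) ≤ e ^ 2 := sq_nonneg e
  have hs1 : e ^ 2 < 1 := by
    rw [he]
    have : 0 < b ^ 2 / a ^ 2 := by positivity
    linarith
  have hsab : a ^ 2 * e ^ 2 = a ^ 2 - b ^ 2 := by
    rw [he]
    field_simp
  have hh : (a - b) / (a + b) = (a - b) / (a + b) := rfl
  have hh0 : 0 ≤ (a - b) / (a + b) := div_nonneg (by linarith) hab.le
  have hh1 : (a - b) / (a + b) < 1 := by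
    rw [div_lt_one hab]; linarith
  have M := EllipseAux.maclaurin_hasSum a b hb hba hs0 hs1 hsab
  have I := EllipseAux.ivory_hasSum a b hb hba hh hh0 hh1
  have hL : (∑' m : ℕ, (-1 / (2 * (m : ℝ) - 1)) * ((Nat.choose (2 * m) m : ℝ) / 4 ^ m) ^ 2 *
        e ^ (2 * m))
      = ∑' m : ℕ, (EllipseAux.g m * ((Nat.centralBinom m : ℝ) / 4 ^ m) * (e ^ 2) ^ m) := by
    congr 1
    funext m
    rw [EllipseAux.g, EllipseAux.choose_eq_centralBinom, pow_mul]
    ring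
  have hR : (∑' n : ℕ, ((Nat.choose (2 * n) n : ℝ) / ((2 * (n : ℝ) - 1) * 4 ^ n)) ^ 2 *
        ((a - b) / (a + b)) ^ (2 * n))
      = ∑' n : ℕ, (EllipseAux.g n ^ 2 * ((a - b) / (a + b)) ^ (2 * n)) := by
    congr 1
    funext n
    have h2 := EllipseAux.two_n_sub_one_ne n
    have h4 : (4:ℝ) ^ n ≠ 0 := by positivity
    rw [EllipseAux.g, EllipseAux.choose_eq_centralBinom]
    field_simp
  rw [hL, hR]
  apply mul_left_cancel₀ Real.pi_ne_zero
  have hM : 2 * Real.pi * a *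
      (∑' m : ℕ, EllipseAux.g m * ((Nat.centralBinom m : ℝ) / 4 ^ m) * (e ^ 2) ^ m)
      = ∫ θ in (0:ℝ)..(2 * Real.pi),
          Real.sqrt (a ^ 2 * Real.cos θ ^ 2 + b ^ 2 * Real.sin θ ^ 2) := by
    rw [← tsum_mul_left]
    exact M.tsum_eq
  have hI : Real.pi * (a + b) *
      (∑' n : ℕ, EllipseAux.g n ^ 2 * ((a - b) / (a + b)) ^ (2 * n))
      = ∫ θ in (0:ℝ)..(2 * Real.pi),
          Real.sqrt (a ^ 2 * Real.cos θ ^ 2 + b ^ 2 * Real.sin θ ^ 2) := by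
    rw [← tsum_mul_left]
    exact I.tsum_eq
  calc Real.pi * (2 * a *
        ∑' m : ℕ, EllipseAux.g m * ((Nat.centralBinom m : ℝ) / 4 ^ m) * (e ^ 2) ^ m)
      = 2 * Real.pi * a *
        (∑' m : ℕ, EllipseAux.g m * ((Nat.centralBinom m : ℝ) / 4 ^ m) * (e ^ 2) ^ m) := by
        ring
    _ = ∫ θ in (0:ℝ)..(2 * Real.pi),
          Real.sqrt (a ^ 2 * Real.cos θ ^ 2 + b ^ 2 * Real.sin θ ^ 2) := hM
    _ = Real.pi * (a + b) *
        (∑' n : ℕ, EllipseAux.g n ^ 2 * ((a - b) / (a + b)) ^ (2 * n)) := hI.symm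
    _ = Real.pi * ((a + b) *
        ∑' n : ℕ, EllipseAux.g n ^ 2 * ((a - b) / (a + b)) ^ (2 * n)) := by ring
end

section
/- For all natural numbers n and k, the generalized binomial coefficient with real upper argument satisfies choose(−n − 1/2, k) = (C(2n+2k, n+k) · C(n+k, k) / C(2n, n)) · (−1)^k / 4^k, where choose(r, k) = (∏_{j=0}^{k−1}(r − j))/k! for a real number r and natural number k, and C(·,·) is the ordinary binomial coefficient of natural numbers. -/
/-- Generalized binomial coefficient `r(r−1)⋯(r−k+1)/k!` for real `r` and natural `k`. -/
noncomputable def gchoose (r : ℝ) (k : ℕ) : ℝ :=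
  (∏ j ∈ Finset.range k, (r - j)) / (Nat.factorial k)

lemma gchoose_succ (r : ℝ) (k : ℕ) :
    gchoose r (k+1) = gchoose r k * (r - k) / (k+1) := by
  unfold gchoose
  rw [Finset.prod_range_succ, Nat.factorial_succ]
  push_cast
  have hk : (k:ℝ)+1 ≠ 0 := by positivity
  have hf : (Nat.factorial k : ℝ) ≠ 0 := by positivity
  rw [mul_comm ((k:ℝ)+1), ← div_div, div_mul_eq_mul_div]

/-- Lemma 1: `choose(−n−1/2, k) = (C(2n+2k,n+k) C(n+k,k) / C(2n,n)) · (−1)^k / 4^k`. -/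
theorem gchoose_neg_half (n k : ℕ) :
    gchoose (-(n : ℝ) - 1 / 2) k
    = ((Nat.choose (2 * n + 2 * k) (n + k) : ℝ) * (Nat.choose (n + k) k : ℝ) /
        (Nat.choose (2 * n) n : ℝ)) * (-1) ^ k / 4 ^ k := by
  have hc : ((2*n).choose n : ℝ) ≠ 0 := by
    exact_mod_cast (Nat.choose_pos (by omega)).ne'
  induction k with
  | zero =>
    simp [gchoose]
    field_simp
  | succ k ih =>
    rw [gchoose_succ, ih]
    have hnk : ((n:ℝ)+k+1) ≠ 0 := by positivity
    have hk : (k:ℝ)+1 ≠ 0 := by positivity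
    have h4 : (4:ℝ)^k ≠ 0 := by positivity
    have hE : (((2*n+2*(k+1)).choose (n+(k+1)) : ℕ) : ℝ)
        = 2*(2*((n:ℝ)+k)+1) * (((2*(n+k)).choose (n+k) : ℕ) : ℝ) / ((n:ℝ)+k+1) := by
      rw [eq_div_iff hnk]
      have := Nat.succ_mul_centralBinom_succ (n+k)
      simp only [Nat.centralBinom] at this
      have e : 2*n+2*(k+1) = 2*(n+k+1) := by ring
      rw [e]
      have : ((n:ℝ)+k+1) * ((2*(n+k+1)).choose (n+k+1) : ℕ) = 2*(2*((n:ℝ)+k)+1) * ((2*(n+k)).choose (n+k) : ℕ) := by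
        exact_mod_cast congrArg (Nat.cast : ℕ → ℝ) this
      show ((2*(n+k+1)).choose (n+k+1) : ℝ) * ((n:ℝ)+k+1) = _
      linarith [this]
    have hF : (((n+(k+1)).choose (k+1) : ℕ) : ℝ)
        = ((n:ℝ)+k+1) * (((n+k).choose k : ℕ) : ℝ) / ((k:ℝ)+1) := by
      rw [eq_div_iff hk]
      have := Nat.add_one_mul_choose_eq (n+k) k
      have : ((n:ℝ)+k+1) * ((n+k).choose k : ℕ) = ((n+k+1).choose (k+1) : ℕ) * ((k:ℝ)+1) := by
        exact_mod_cast congrArg (Nat.cast : ℕ → ℝ) this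
      show ((n+k+1).choose (k+1) : ℝ) * ((k:ℝ)+1) = _
      linarith [this]
    rw [hE, hF]
    have hm : 2*n+2*k = 2*(n+k) := by ring
    rw [hm]
    field_simp
    ring
end

section
/- For every integer n ≥ 1, the sum S_n := ∑_{m=0}^{n} ((−1)^m / 2^m) · C(2m, m) · C(n, m) (a sum of rational numbers) equals (1/4^{n/2}) · C(n, n/2) if n is even, and equals 0 if n is odd. -/
open Finset
private def F (n m : ℕ) : ℚ :=
  ((-1 : ℚ) ^ m / 2 ^ m) * (Nat.choose (2 * m) m : ℚ) * (Nat.choose n m : ℚ)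
private def G (n m : ℕ) : ℚ :=
  ((-1 : ℚ) ^ m / 2 ^ m) * (m : ℚ) ^ 2 * (Nat.choose (2 * m) m : ℚ) * (Nat.choose (n + 2) m : ℚ)
private lemma natKey (n m : ℕ) :
    (n+2)^2 * Nat.choose (n+2) m
      = (n+1)*(n+2) * Nat.choose n m + m^2 * Nat.choose (n+2) m
        + (2*m+1)*(m+1) * Nat.choose (n+2) (m+1) := by
  rcases le_or_gt m (n+1) with h | h
  · have h1 := Nat.choose_succ_right_eq (n+2) m
    have h2 := Nat.choose_mul_succ_eq n m
    have h3 := Nat.choose_mul_succ_eq (n+1) m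
    zify [show m ≤ n + 2 from by omega, h] at h1 h2 h3 ⊢
    linear_combination (-(2*(m:ℤ)+1))*h1 - ((n:ℤ)+2)*h2 - ((n:ℤ)+1-m)*h3
  · rcases eq_or_lt_of_le (Nat.succ_le_of_lt h) with h' | h'
    · subst h'
      rw [show (n+1).succ = n+2 from rfl, Nat.choose_self,
        Nat.choose_eq_zero_of_lt (by omega), Nat.choose_eq_zero_of_lt (by omega)]
      ring
    · have e1 : Nat.choose (n+2) m = 0 := Nat.choose_eq_zero_of_lt (by omega)
      have e2 : Nat.choose n m = 0 := Nat.choose_eq_zero_of_lt (by omega)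
      have e3 : Nat.choose (n+2) (m+1) = 0 := Nat.choose_eq_zero_of_lt (by omega)
      simp [e1,e2,e3]

private lemma centralKey (m : ℕ) :
    ((m:ℚ)+1) * (Nat.choose (2*(m+1)) (m+1) : ℚ) = 2*(2*(m:ℚ)+1) * (Nat.choose (2*m) m : ℚ) := by
  have h := Nat.succ_mul_centralBinom_succ m
  simp only [Nat.centralBinom] at h
  exact_mod_cast h

private lemma step (n m : ℕ) :
    ((n:ℚ)+2)^2 * F (n+2) m - ((n:ℚ)+1)*((n:ℚ)+2) * F n m = G n m - G n (m+1) := by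
  have hk : (((n:ℚ)+2)^2 * (Nat.choose (n+2) m : ℚ)
      = ((n:ℚ)+1)*((n:ℚ)+2) * (Nat.choose n m : ℚ) + (m:ℚ)^2 * (Nat.choose (n+2) m : ℚ)
        + (2*(m:ℚ)+1)*((m:ℚ)+1) * (Nat.choose (n+2) (m+1) : ℚ)) := by
    exact_mod_cast natKey n m
  have hc := centralKey m
  unfold F G
  push_cast
  linear_combination ((-1:ℚ)^m/2^m * (Nat.choose (2*m) m : ℚ)) * hk
    - ((-1:ℚ)^m/2^m * ((m:ℚ)+1) * (Nat.choose (n+2) (m+1) : ℚ) / 2) * hc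


private lemma sum_extend (n k : ℕ) (h : n + 1 ≤ k) :
    ∑ m ∈ range (n+1), F n m = ∑ m ∈ range k, F n m := by
  apply Finset.sum_subset
  · exact Finset.range_subset_range.2 (by omega)
  · intro m _ hm
    simp only [Finset.mem_range, not_lt] at hm
    have : Nat.choose n m = 0 := Nat.choose_eq_zero_of_lt (by omega)
    simp [F, this]

private lemma Srec (n : ℕ) :
    ∑ m ∈ range (n+3), F (n+2) m
      = ((n:ℚ)+1)/((n:ℚ)+2) * ∑ m ∈ range (n+1), F n m := by
  have htel : ∑ m ∈ range (n+3), (G n m - G n (m+1)) = G n 0 - G n (n+3) :=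
    Finset.sum_range_sub' (G n) (n+3)
  have h0 : G n 0 = 0 := by simp [G]
  have h1 : G n (n+3) = 0 := by
    have : Nat.choose (n+2) (n+3) = 0 := Nat.choose_eq_zero_of_lt (by omega)
    simp [G, this]
  have hsum : ∑ m ∈ range (n+3), (((n:ℚ)+2)^2 * F (n+2) m - ((n:ℚ)+1)*((n:ℚ)+2) * F n m) = 0 := by
    rw [Finset.sum_congr rfl (fun m _ => step n m), htel, h0, h1, sub_zero]
  rw [Finset.sum_sub_distrib, ← Finset.mul_sum, ← Finset.mul_sum, sub_eq_zero] at hsum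
  have hne : ((n:ℚ)+2) ≠ 0 := by positivity
  rw [sum_extend n (n+3) (by omega)]
  have h2 : ((n:ℚ)+2)^2 ≠ 0 := by positivity
  apply mul_left_cancel₀ h2
  rw [hsum]
  field_simp

private lemma key (n : ℕ) :
    ∑ m ∈ range (n+1), F n m
      = if Even n then (1 / 4 ^ (n / 2)) * (Nat.choose n (n / 2) : ℚ) else 0 := by
  induction n using Nat.strong_induction_on with
  | _ n ih =>
    match n with
    | 0 => norm_num [F]
    | 1 => norm_num [F, Finset.sum_range_succ]
    | (k+2) =>
      have hk := ih k (by omega)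
      rw [show k+2+1 = k+3 from rfl, Srec k, hk]
      rcases Nat.even_or_odd k with he | ho
      · obtain ⟨j, hj⟩ := he
        subst hj
        have hev : Even (j + j) := ⟨j, rfl⟩
        have hev2 : Even (j + j + 2) := by exact ⟨j+1, by ring⟩
        rw [if_pos hev, if_pos hev2]
        have hd1 : (j + j) / 2 = j := by omega
        have hd2 : (j + j + 2) / 2 = j + 1 := by omega
        rw [hd1, hd2]
        have hc : ((j:ℚ)+1) * (Nat.choose (2*(j+1)) (j+1) : ℚ)
            = 2*(2*(j:ℚ)+1) * (Nat.choose (2*j) j : ℚ) := by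
          have h := Nat.succ_mul_centralBinom_succ j
          simp only [Nat.centralBinom] at h
          exact_mod_cast h
        have e1 : j + j + 2 = 2*(j+1) := by ring
        have e2 : j + j = 2*j := by ring
        rw [e1, e2] at *
        have h4 : (4:ℚ)^(j+1) ≠ 0 := by positivity
        have h4' : (4:ℚ)^j ≠ 0 := by positivity
        have hj1 : ((j:ℚ)+1) ≠ 0 := by positivity
        have hj2 : (2*(j:ℚ)+2) ≠ 0 := by positivity
        push_cast
        field_simp
        linear_combination (-(2:ℚ)) * (4:ℚ)^j * hc
      · rw [Nat.odd_iff] at ho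
        have ho2 : ¬ Even (k+2) := by rw [Nat.even_iff]; omega
        have ho1 : ¬ Even k := by rw [Nat.even_iff]; omega
        rw [if_neg ho1, if_neg ho2, mul_zero]

/-- Lemma 2: for `n ≥ 1`,
`∑_{m=0}^{n} ((−1)^m/2^m) C(2m,m) C(n,m)` equals `C(n, n/2)/4^{n/2}` if `n` is even
and `0` if `n` is odd. -/
theorem alternating_central_binomial_sum (n : ℕ) (hn : 1 ≤ n) :
    ∑ m ∈ Finset.range (n + 1),
        ((-1 : ℚ) ^ m / 2 ^ m) * (Nat.choose (2 * m) m : ℚ) * (Nat.choose n m : ℚ)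
    = if Even n then (1 / 4 ^ (n / 2)) * (Nat.choose n (n / 2) : ℚ) else 0 := key n
end
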